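/- Let φ : [0,∞) → (0,∞) be a non-decreasing, positive, concave function and let Φ(x) = ∫₀ˣ φ(t) dt. There exists a constant C_φ > 0 such that for every p ∈ (0,1], if X is a geometric random variable with success probability p (counting the number of failures before the first success), then (1/2)·Φ(1/p) ≤ (1/2)·(1/p)·φ(1/p) ≤ E[Φ(1+X)] ≤ C_φ·(1/p)·φ(1/p) ≤ 2C_φ·Φ(1/p). -/

import Mathlib

open MeasureTheory ProbabilityTheory Filter

section aux
variable {φ : ℝ → ℝ}

lemma phi_intble (hmono : MonotoneOn φ (Set.Ici 0)) {a b : ℝ} (ha : 0 ≤ a) (hb : 0 ≤ b) :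
    IntervalIntegrable φ volume a b := by
  apply MonotoneOn.intervalIntegrable
  apply hmono.mono
  intro x hx
  rw [Set.mem_uIcc] at hx
  rcases hx with ⟨h1, _⟩ | ⟨h1, _⟩
  · exact le_trans ha h1
  · exact le_trans hb h1

-- L1
lemma Phi_le (hmono : MonotoneOn φ (Set.Ici 0)) {b : ℝ} (hb : 0 ≤ b) :
    (∫ x in (0:ℝ)..b, φ x) ≤ b * φ b := by
  have h := intervalIntegral.integral_mono_on hb (phi_intble hmono le_rfl hb)
    (intervalIntegrable_const (c := φ b)) (fun x hx => hmono hx.1 hb hx.2)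
  simpa using h

-- L2
lemma le_Phi (hmono : MonotoneOn φ (Set.Ici 0)) (hpos : ∀ t ∈ Set.Ici (0:ℝ), 0 < φ t)
    (hconc : ConcaveOn ℝ (Set.Ici 0) φ) {b : ℝ} (hb : 0 ≤ b) :
    b / 2 * φ b ≤ ∫ x in (0:ℝ)..b, φ x := by
  rcases eq_or_lt_of_le hb with rfl | hb'
  · simp
  have key : ∀ x ∈ Set.Icc (0:ℝ) b, x / b * φ b ≤ φ x := by
    intro x hx
    have ha' : (0:ℝ) ≤ 1 - x/b := by rw [sub_nonneg]; exact div_le_one_of_le₀ hx.2 hb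
    have hb'' : (0:ℝ) ≤ x/b := div_nonneg hx.1 hb
    have hab : (1 - x/b) + (x/b) = 1 := by ring
    have h2 := hconc.2 (Set.self_mem_Ici) (Set.mem_Ici.2 hb) ha' hb'' hab
    have h0 : 0 ≤ (1 - x/b) * φ 0 := mul_nonneg ha' (hpos 0 Set.self_mem_Ici).le
    simp only [smul_eq_mul, mul_zero, smul_zero, zero_add] at h2
    rw [div_mul_cancel₀ _ (ne_of_gt hb')] at h2
    linarith
  have h := intervalIntegral.integral_mono_on hb
    (((continuous_id.div_const b).mul continuous_const).intervalIntegrable 0 b)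
    (phi_intble hmono le_rfl hb) key
  have h3 : (∫ x in (0:ℝ)..b, x / b * φ b) = b / 2 * φ b := by
    simp only [div_mul_eq_mul_div, intervalIntegral.integral_div,
      intervalIntegral.integral_mul_const, integral_id]
    field_simp
    ring
  linarith [h3 ▸ h]

-- L3 supporting line
lemma Phi_support (hmono : MonotoneOn φ (Set.Ici 0)) {m y : ℝ} (hm : 0 ≤ m) (hy : 0 ≤ y) :
    (∫ x in (0:ℝ)..m, φ x) + φ m * (y - m) ≤ ∫ x in (0:ℝ)..y, φ x := by
  have hsplit : (∫ x in (0:ℝ)..y, φ x) - (∫ x in (0:ℝ)..m, φ x) = ∫ x in m..y, φ x := by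
    rw [← intervalIntegral.integral_add_adjacent_intervals (phi_intble hmono le_rfl hm)
      (phi_intble hmono hm hy)]
    ring
  have : φ m * (y - m) ≤ ∫ x in m..y, φ x := by
    rcases le_total m y with h | h
    · have := intervalIntegral.integral_mono_on h (intervalIntegrable_const (c := φ m))
        (phi_intble hmono hm hy) (fun x hx => hmono hm (le_trans hm hx.1) hx.1)
      simpa [mul_comm] using this
    · rw [intervalIntegral.integral_symm]
      have := intervalIntegral.integral_mono_on h (phi_intble hmono hy hm)
        (intervalIntegrable_const (c := φ m)) (fun x hx => hmono (le_trans hy hx.1) hm hx.2)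
      simp only [intervalIntegral.integral_const, smul_eq_mul] at this
      nlinarith [this]
  linarith

-- L4 growth
lemma phi_growth (hmono : MonotoneOn φ (Set.Ici 0)) (hpos : ∀ t ∈ Set.Ici (0:ℝ), 0 < φ t)
    (hconc : ConcaveOn ℝ (Set.Ici 0) φ) {m x : ℝ} (hm : 0 < m) (hx : 0 ≤ x) :
    φ x ≤ φ m * (1 + x / m) := by
  rcases le_total x m with h | h
  · have h1 : φ x ≤ φ m := hmono hx hm.le h
    nlinarith [(hpos m hm.le), div_nonneg hx hm.le]
  · have hx' : 0 < x := lt_of_lt_of_le hm h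
    have ha' : (0:ℝ) ≤ 1 - m/x := by rw [sub_nonneg]; exact div_le_one_of_le₀ h hx
    have hb'' : (0:ℝ) ≤ m/x := div_nonneg hm.le hx
    have hab : (1 - m/x) + (m/x) = 1 := by ring
    have h2 := hconc.2 (Set.self_mem_Ici) (Set.mem_Ici.2 hx) ha' hb'' hab
    simp only [smul_eq_mul, mul_zero, smul_zero, zero_add] at h2
    rw [div_mul_cancel₀ _ (ne_of_gt hx')] at h2
    have h0 : 0 ≤ (1 - m/x) * φ 0 := mul_nonneg ha' (hpos 0 Set.self_mem_Ici).le
    have h3 : m/x * φ x ≤ φ m := by linarith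
    have h3' : m * φ x / x ≤ φ m := by rw [← div_mul_eq_mul_div]; exact h3
    have h5 : m * φ x ≤ φ m * x := (div_le_iff₀ hx').1 h3'
    have h6 : φ x ≤ φ m * (x / m) := by
      rw [mul_div_assoc', le_div_iff₀ hm]; linarith
    have h7 : φ m * (1 + x / m) = φ m + φ m * (x / m) := by ring
    linarith [hpos m hm.le]

end aux

lemma geom_machinery {Ω : Type} [MeasurableSpace Ω] (μ : Measure Ω) [IsProbabilityMeasure μ]
    (X : Ω → ℕ) (hX : Measurable X) {p : ℝ} (hp : 0 < p) (hp1 : p ≤ 1)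
    (hgeom : ∀ k : ℕ, μ {ω | X ω = k} = ENNReal.ofReal (p * (1 - p) ^ k))
    (g : ℕ → ℝ) (hsum : Summable fun k => |g k| * (p * (1 - p) ^ k)) :
    Integrable (fun ω => g (X ω)) μ ∧
      ∫ ω, g (X ω) ∂μ = ∑' k, (p * (1 - p) ^ k) * g k := by
  have hq0 : (0:ℝ) ≤ 1 - p := by linarith
  have hcoef : ∀ k : ℕ, 0 ≤ p * (1 - p) ^ k := fun k => mul_nonneg hp.le (pow_nonneg hq0 k)
  set ν := Measure.map X μ with hν
  have hmeas : ∀ k : ℕ, ν {k} = ENNReal.ofReal (p * (1 - p) ^ k) := by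
    intro k
    rw [hν, Measure.map_apply hX (measurableSet_singleton k)]
    exact hgeom k
  have hgm : Measurable g := measurable_from_top
  have hgint : Integrable g ν := by
    constructor
    · exact hgm.aestronglyMeasurable
    · rw [HasFiniteIntegral, lintegral_countable']
      have : ∀ k : ℕ, ‖g k‖ₑ * ν {k} = ENNReal.ofReal (|g k| * (p * (1 - p) ^ k)) := by
        intro k
        rw [hmeas k, ENNReal.ofReal_mul (abs_nonneg _)]
        congr 1
        rw [← Real.norm_eq_abs, ofReal_norm_eq_enorm]
      rw [tsum_congr this, ← ENNReal.ofReal_tsum_of_nonneg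
        (fun k => mul_nonneg (abs_nonneg _) (hcoef k)) hsum]
      exact ENNReal.ofReal_lt_top
  refine ⟨(integrable_map_measure hgm.aestronglyMeasurable hX.aemeasurable).1 hgint, ?_⟩
  rw [← integral_map hX.aemeasurable hgm.aestronglyMeasurable, integral_countable' hgint]
  apply tsum_congr
  intro k
  rw [measureReal_def, hmeas k, ENNReal.toReal_ofReal (hcoef k), smul_eq_mul]

lemma choose_two_real (k : ℕ) : (((k + 2).choose 2 : ℕ) : ℝ) * 2 = (k + 1) * (k + 2) := by
  have h : (k + 2).choose 2 * 2 = (k + 1) * (k + 2) := by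
    rw [Nat.choose_two_right]
    have h1 : (k + 2) * (k + 2 - 1) = (k + 1) * ((k + 1) + 1) := by
      simp [Nat.add_sub_cancel]; ring
    rw [h1, Nat.div_mul_cancel (Nat.even_mul_succ_self (k + 1)).two_dvd]
  exact_mod_cast congrArg (Nat.cast (R := ℝ)) h

/-- For a non-decreasing, positive, concave `φ` on `[0,∞)` with primitive `Φ`, there is a
constant `C_φ > 0` such that for every `p ∈ (0,1]` and every geometric random variable `X`
of parameter `p` (number of failures before first success),
`(1/2)Φ(1/p) ≤ (1/2)(1/p)φ(1/p) ≤ E[Φ(1+X)] ≤ C_φ (1/p) φ(1/p) ≤ 2 C_φ Φ(1/p)`. -/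
theorem stmt1 (φ : ℝ → ℝ)
    (hmono : MonotoneOn φ (Set.Ici 0))
    (hpos : ∀ t ∈ Set.Ici (0 : ℝ), 0 < φ t)
    (hconc : ConcaveOn ℝ (Set.Ici 0) φ) :
    ∃ C : ℝ, 0 < C ∧
      ∀ (p : ℝ), 0 < p → p ≤ 1 →
      ∀ (Ω : Type) (_ : MeasurableSpace Ω) (μ : Measure Ω) (_ : IsProbabilityMeasure μ)
        (X : Ω → ℕ) (_ : Measurable X),
        (∀ k : ℕ, μ {ω | X ω = k} = ENNReal.ofReal (p * (1 - p) ^ k)) →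
        (1/2) * (∫ x in (0:ℝ)..(1/p), φ x) ≤ (1/2) * (1/p) * φ (1/p) ∧
        (1/2) * (1/p) * φ (1/p) ≤ (∫ ω, (∫ x in (0:ℝ)..(1 + (X ω : ℝ)), φ x) ∂μ) ∧
        (∫ ω, (∫ x in (0:ℝ)..(1 + (X ω : ℝ)), φ x) ∂μ) ≤ C * ((1/p) * φ (1/p)) ∧
        C * ((1/p) * φ (1/p)) ≤ 2 * C * (∫ x in (0:ℝ)..(1/p), φ x) := by
  refine ⟨3, by norm_num, ?_⟩
  intro p hp hp1 Ω mΩ μ hμ X hX hgeom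
  haveI := hμ
  have hq0 : (0:ℝ) ≤ 1 - p := by linarith
  have hq1 : (1 - p : ℝ) < 1 := by linarith
  have hm0 : (0:ℝ) < 1/p := by positivity
  set m : ℝ := 1/p with hm
  set φm := φ m with hφm
  set Φm := (∫ x in (0:ℝ)..m, φ x) with hΦm
  have hφm_pos : 0 < φm := hpos m (Set.mem_Ici.2 hm0.le)
  have hP1 : Φm ≤ m * φm := Phi_le hmono hm0.le
  have hP2 : m/2 * φm ≤ Φm := le_Phi hmono hpos hconc hm0.le
  have hcoef : ∀ k : ℕ, 0 ≤ p * (1 - p) ^ k := fun k => mul_nonneg hp.le (pow_nonneg hq0 k)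
  set g : ℕ → ℝ := fun k => ∫ x in (0:ℝ)..(1 + (k:ℝ)), φ x with hgdef
  have hk_nonneg : ∀ k : ℕ, (0:ℝ) ≤ 1 + k := fun k => by positivity
  have hg_nonneg : ∀ k, 0 ≤ g k := fun k =>
    intervalIntegral.integral_nonneg (hk_nonneg k) (fun x hx => (hpos x hx.1).le)
  have hg_low : ∀ k : ℕ, Φm + φm * ((1 + (k:ℝ)) - m) ≤ g k := fun k =>
    Phi_support hmono hm0.le (hk_nonneg k)
  have hg_up : ∀ k : ℕ, g k ≤ φm * ((1 + (k:ℝ)) + 2 * p * (((k+2).choose 2 : ℕ) : ℝ)) := by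
    intro k
    have h1 : g k ≤ (1 + (k:ℝ)) * φ (1 + k) := Phi_le hmono (hk_nonneg k)
    have h2 : φ (1 + (k:ℝ)) ≤ φm * (1 + (1 + (k:ℝ))/m) := phi_growth hmono hpos hconc hm0 (hk_nonneg k)
    have hdm : (1 + (k:ℝ))/m = (1 + (k:ℝ)) * p := by rw [hm]; field_simp
    rw [hdm] at h2
    have h3 : (1 + (k:ℝ))^2 ≤ (((k+2).choose 2 : ℕ) : ℝ) * 2 := by
      rw [choose_two_real k]
      nlinarith [Nat.cast_nonneg (α := ℝ) k]
    have h4 : g k ≤ (1 + (k:ℝ)) * (φm * (1 + (1 + (k:ℝ)) * p)) :=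
      le_trans h1 (mul_le_mul_of_nonneg_left h2 (hk_nonneg k))
    have h5 : (1 + (k:ℝ)) * (φm * (1 + (1 + (k:ℝ)) * p)) = φm * ((1 + (k:ℝ)) + (1 + (k:ℝ))^2 * p) := by
      ring
    rw [h5] at h4
    refine le_trans h4 (mul_le_mul_of_nonneg_left ?_ hφm_pos.le)
    nlinarith [h3, hp.le]
  -- geometric sums
  have hS0 : HasSum (fun k : ℕ => (1 - p) ^ k) p⁻¹ := by
    have h := hasSum_geometric_of_lt_one hq0 hq1
    rwa [show (1:ℝ) - (1 - p) = p by ring] at h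
  have hnq : ‖(1 - p : ℝ)‖ < 1 := by rw [Real.norm_eq_abs, abs_of_nonneg hq0]; linarith
  have hS1 : HasSum (fun k : ℕ => (k : ℝ) * (1 - p) ^ k) ((1 - p) / p ^ 2) := by
    have h := hasSum_coe_mul_geometric_of_norm_lt_one hnq
    rwa [show (1:ℝ) - (1 - p) = p by ring] at h
  have hS2 : HasSum (fun k : ℕ => (((k + 2).choose 2 : ℕ) : ℝ) * (1 - p) ^ k) (1 / p ^ 3) := by
    have h := hasSum_choose_mul_geometric_of_norm_lt_one 2 hnq
    rw [show (1:ℝ) - (1 - p) = p by ring] at h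
    convert h using 2
  -- lower side hasSum
  have hLow : HasSum (fun k : ℕ => (p * (1 - p) ^ k) * (Φm + φm * ((1 + (k:ℝ)) - m))) Φm := by
    have h := (hS0.mul_left ((Φm + φm * (1 - m)) * p)).add (hS1.mul_left (φm * p))
    have h2 : (fun k : ℕ => (p * (1 - p) ^ k) * (Φm + φm * ((1 + (k:ℝ)) - m)))
        = fun k : ℕ => ((Φm + φm * (1 - m)) * p) * (1 - p) ^ k + (φm * p) * ((k:ℝ) * (1 - p) ^ k) := by
      funext k; ring
    rw [h2]
    convert h using 1
    · rfl
    rw [hm]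
    field_simp
    ring
  -- upper side hasSum
  have hUp : HasSum (fun k : ℕ => (p * (1 - p) ^ k) *
      (φm * ((1 + (k:ℝ)) + 2 * p * (((k+2).choose 2 : ℕ) : ℝ)))) (3 * (m * φm)) := by
    have h := ((hS0.add hS1).mul_left (φm * p)).add (hS2.mul_left (2 * φm * p ^ 2))
    have h2 : (fun k : ℕ => (p * (1 - p) ^ k) *
        (φm * ((1 + (k:ℝ)) + 2 * p * (((k+2).choose 2 : ℕ) : ℝ))))
        = fun k : ℕ => (φm * p) * ((1 - p) ^ k + (k:ℝ) * (1 - p) ^ k)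
          + (2 * φm * p ^ 2) * ((((k+2).choose 2 : ℕ) : ℝ) * (1 - p) ^ k) := by
      funext k; ring
    rw [h2]
    convert h using 1
    · rfl
    rw [hm]
    field_simp
    ring
  -- summability of the actual series
  have hTle : ∀ k : ℕ, (p * (1 - p) ^ k) * g k ≤ (p * (1 - p) ^ k) *
      (φm * ((1 + (k:ℝ)) + 2 * p * (((k+2).choose 2 : ℕ) : ℝ))) :=
    fun k => mul_le_mul_of_nonneg_left (hg_up k) (hcoef k)
  have hTsum : Summable fun k : ℕ => (p * (1 - p) ^ k) * g k :=
    Summable.of_nonneg_of_le (fun k => mul_nonneg (hcoef k) (hg_nonneg k)) hTle hUp.summable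
  have hsum' : Summable fun k : ℕ => |g k| * (p * (1 - p) ^ k) := by
    have h2 : (fun k : ℕ => |g k| * (p * (1 - p) ^ k)) = fun k : ℕ => (p * (1 - p) ^ k) * g k := by
      funext k; rw [abs_of_nonneg (hg_nonneg k)]; ring
    rw [h2]; exact hTsum
  obtain ⟨hint, heq⟩ := geom_machinery μ X hX hp hp1 hgeom g hsum'
  have heq' : (∫ ω, (∫ x in (0:ℝ)..(1 + (X ω : ℝ)), φ x) ∂μ)
      = ∑' k : ℕ, (p * (1 - p) ^ k) * g k := heq
  -- lower bound on the expectation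
  have hlow2 : Φm ≤ ∑' k : ℕ, (p * (1 - p) ^ k) * g k := by
    have h := Summable.tsum_le_tsum (f := fun k : ℕ => (p * (1 - p) ^ k) * (Φm + φm * ((1 + (k:ℝ)) - m)))
      (fun k => mul_le_mul_of_nonneg_left (hg_low k) (hcoef k)) hLow.summable hTsum
    rwa [hLow.tsum_eq] at h
  have hup2 : (∑' k : ℕ, (p * (1 - p) ^ k) * g k) ≤ 3 * (m * φm) := by
    have h := Summable.tsum_le_tsum hTle hTsum hUp.summable
    rwa [hUp.tsum_eq] at h
  refine ⟨by linarith, ?_, ?_, ?_⟩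
  · rw [heq']; linarith
  · rw [heq']; linarith
  · linarith
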